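/- Let d ≥ 2 be a fixed integer. There exists a constant C > 0 depending only on d such that the following holds for every R ≥ 1 with R = O(1), every ε ∈ (0,1), and every compact convex body K ⊆ ℝ^d with B_d ⊆ K ⊆ R·B_d. Set η = √(ε/R), let {x_1, …, x_n} be an η-net of the sphere (R+1)·S^{d-1} of radius R+1, and for each j let p_j ∈ K be a point with ‖p_j − π_K(x_j)‖ ≤ ε, where π_K(x_j) denotes the (unique) metric projection of x_j onto K. Then the convex hull of {p_1, …, p_n} is contained in K and is a Cε-kernel of K. -/

import Mathlib

open Metric Set
open scoped RealInnerProductSpace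

noncomputable section

/-- `N` is a `δ`-net of `S`. -/
def IsNet {d : ℕ} (δ : ℝ) (N S : Set (EuclideanSpace ℝ (Fin d))) : Prop :=
  N ⊆ S ∧ (∀ v ∈ N, ∀ w ∈ N, v ≠ w → δ ≤ dist v w) ∧ ∀ v ∈ S, ∃ w ∈ N, dist v w ≤ δ

/-- The width of a set `K` in direction `u`. -/
def dirWidth {d : ℕ} (u : EuclideanSpace ℝ (Fin d)) (K : Set (EuclideanSpace ℝ (Fin d))) : ℝ :=
  sSup ((fun x => ⟪u, x⟫) '' K) - sInf ((fun x => ⟪u, x⟫) '' K)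

/-- `Kt` is an `ε`-kernel of `K`. -/
def IsEpsKernel {d : ℕ} (ε : ℝ) (Kt K : Set (EuclideanSpace ℝ (Fin d))) : Prop :=
  Kt ⊆ K ∧ ∀ u : EuclideanSpace ℝ (Fin d), ‖u‖ = 1 →
    (1 - ε) * dirWidth u K ≤ dirWidth u Kt

lemma arith_aux (s t a η B : ℝ) (ha0 : 0 ≤ a) (hts : 1/2 ≤ t + s) (hB2 : B^2 ≤ η^2)
    (hsq : (s + t + a)^2 ≤ B^2 + 2*(t*s) + t^2) : a ≤ η^2 := by
  have h2ats : 2*a*(t+s) ≤ η^2 := by nlinarith [sq_nonneg s, sq_nonneg a]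
  have h3 : 0 ≤ a*(2*(t+s)-1) := mul_nonneg ha0 (by linarith)
  nlinarith

set_option maxHeartbeats 1000000 in
lemma key_sSup {d n : ℕ} (R ε : ℝ) (hR : 1 ≤ R) (hε : 0 < ε)
    (K : Set (EuclideanSpace ℝ (Fin d))) (hKc : IsCompact K) (hKconv : Convex ℝ K)
    (hKR : K ⊆ closedBall 0 R) (hKne : K.Nonempty)
    (xs : Fin n → EuclideanSpace ℝ (Fin d))
    (hnet : IsNet (Real.sqrt (ε / R)) (Set.range xs) (sphere 0 (R+1)))
    (p : Fin n → EuclideanSpace ℝ (Fin d)) (hp : ∀ j, p j ∈ K)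
    (happ : ∀ j, ∃ q ∈ K, (∀ z ∈ K, dist (xs j) q ≤ dist (xs j) z) ∧ dist (p j) q ≤ ε)
    (hη : Real.sqrt (ε / R) ≤ 1/2)
    (u : EuclideanSpace ℝ (Fin d)) (hu : ‖u‖ = 1) :
    sSup ((fun x => ⟪u, x⟫) '' K) ≤
      sSup ((fun x => ⟪u, x⟫) '' (convexHull ℝ (Set.range p))) + 2*ε := by
  set η := Real.sqrt (ε / R) with hηdef
  have hη0 : 0 ≤ η := Real.sqrt_nonneg _
  have hη2 : η^2 = ε / R := Real.sq_sqrt (by positivity)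
  have hcont : Continuous (fun x : EuclideanSpace ℝ (Fin d) => ⟪u, x⟫) :=
    continuous_const.inner continuous_id
  obtain ⟨σ, hσK, hσmax⟩ := hKc.exists_isMaxOn hKne hcont.continuousOn
  -- find t with ‖σ + t • u‖ = R + 1
  have hcont2 : ContinuousOn (fun t : ℝ => ‖σ + t • u‖) (Icc 0 (2*R+2)) := by
    apply Continuous.continuousOn; continuity
  have hσR : ‖σ‖ ≤ R := by simpa using hKR hσK
  have hmem : R + 1 ∈ Icc (‖σ + (0:ℝ) • u‖) (‖σ + (2*R+2) • u‖) := by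
    constructor
    · simpa using by linarith
    · have h3 : ‖(2*R+2) • u‖ - ‖-σ‖ ≤ ‖(2*R+2) • u - (-σ)‖ := norm_sub_norm_le _ _
      have h1 : ‖(2*R+2) • u‖ = 2*R+2 := by
        rw [norm_smul, hu]; simp [abs_of_nonneg (by linarith : (0:ℝ) ≤ 2*R+2)]
      have h2 : σ + (2*R+2) • u = (2*R+2) • u - (-σ) := by abel
      rw [h2]
      rw [sub_neg_eq_add] at h3
      rw [h1, norm_neg] at h3
      rw [sub_neg_eq_add]
      linarith
  obtain ⟨t, ht_mem, ht⟩ := intermediate_value_Icc (by linarith : (0:ℝ) ≤ 2*R+2) hcont2 hmem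
  have ht0 : 0 ≤ t := ht_mem.1
  have hynorm : ‖σ + t • u‖ = R + 1 := ht
  have ht1 : 1 ≤ t := by
    have h1 : ‖t • u‖ = t := by rw [norm_smul, hu]; simp [abs_of_nonneg ht0]
    have := norm_add_le σ (t • u)
    rw [hynorm, h1] at this; linarith
  set y := σ + t • u with hy
  have hys : y ∈ sphere (0 : EuclideanSpace ℝ (Fin d)) (R+1) := by
    simp [hy, mem_sphere_iff_norm, hynorm, ht]
  obtain ⟨w, hw, hwy⟩ := hnet.2.2 y hys
  obtain ⟨j, rfl⟩ := hw
  obtain ⟨q, hqK, hqproj, hpq⟩ := happ j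
  -- inner product computations
  set s := ⟪u, xs j - y⟫ with hs
  set a := ⟪u, σ - q⟫ with ha
  have ha0 : 0 ≤ a := by
    have h := hσmax hqK
    simp only [Set.mem_setOf_eq] at h
    rw [ha, inner_sub_right]; linarith
  have hs_abs : |s| ≤ η := by
    calc |s| ≤ ‖u‖ * ‖xs j - y‖ := abs_real_inner_le_norm u _
    _ = dist y (xs j) := by rw [hu, one_mul, dist_comm, dist_eq_norm]
    _ ≤ η := hwy
  have hdist : ‖xs j - q‖ ≤ ‖xs j - σ‖ := by
    have := hqproj σ hσK; rwa [dist_eq_norm, dist_eq_norm] at this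
  have hexp : ‖xs j - σ‖^2 = ‖xs j - y‖^2 + 2*(t*s) + t^2 := by
    have h1 : xs j - σ = (xs j - y) + t • u := by rw [hy]; abel
    rw [h1, norm_add_sq_real]
    have h2 : ⟪xs j - y, t • u⟫ = t * s := by
      rw [real_inner_smul_right, real_inner_comm]
    have h3 : ‖t • u‖^2 = t^2 := by
      rw [norm_smul, hu, mul_one, Real.norm_eq_abs, sq_abs]
    rw [h2, h3]
  have hnorm_y : ‖xs j - y‖ ≤ η := by rw [← dist_eq_norm, dist_comm]; exact hwy
  have hinner_q : ⟪u, xs j - q⟫ = s + t + a := by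
    have h1 : xs j - q = (xs j - y) + t • u + (σ - q) := by rw [hy]; abel
    rw [h1, inner_add_right, inner_add_right, real_inner_smul_right,
      real_inner_self_eq_norm_sq, hu]
    ring
  have hcs : s + t + a ≤ ‖xs j - q‖ := by
    have := real_inner_le_norm u (xs j - q)
    rw [hinner_q, hu, one_mul] at this; exact this
  have hts : 1/2 ≤ t + s := by
    have := abs_le.1 hs_abs
    linarith
  have hB2 : ‖xs j - y‖^2 ≤ η^2 := pow_le_pow_left₀ (norm_nonneg _) hnorm_y 2
  clear_value s a
  have ha_key : a ≤ η^2 := by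
    have hsq : (s + t + a)^2 ≤ ‖xs j - σ‖^2 := by
      have h1 : 0 ≤ s + t + a := by
        have := abs_le.1 hs_abs
        linarith
      exact pow_le_pow_left₀ h1 (hcs.trans hdist) 2
    rw [hexp] at hsq
    exact arith_aux s t a η _ ha0 hts hB2 hsq
  -- conclude
  have hbddK : BddAbove ((fun x => ⟪u, x⟫) '' K) := (hKc.image hcont).bddAbove
  have hhull : convexHull ℝ (Set.range p) ⊆ K :=
    convexHull_min (by rintro _ ⟨j, rfl⟩; exact hp j) hKconv
  have hbddH : BddAbove ((fun x => ⟪u, x⟫) '' (convexHull ℝ (Set.range p))) :=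
    hbddK.mono (image_mono hhull)
  have hsupK : sSup ((fun x => ⟪u, x⟫) '' K) = ⟪u, σ⟫ := by
    apply le_antisymm
    · apply csSup_le (hKne.image _)
      rintro _ ⟨z, hz, rfl⟩; exact hσmax hz
    · exact le_csSup hbddK (mem_image_of_mem _ hσK)
  have hpjmem : p j ∈ convexHull ℝ (Set.range p) :=
    subset_convexHull ℝ _ ⟨j, rfl⟩
  have hle : ⟪u, p j⟫ ≤ sSup ((fun x => ⟪u, x⟫) '' (convexHull ℝ (Set.range p))) :=
    le_csSup hbddH (mem_image_of_mem _ hpjmem)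
  have hqp : ⟪u, q - p j⟫ ≤ ε := by
    calc ⟪u, q - p j⟫ ≤ ‖u‖ * ‖q - p j‖ := real_inner_le_norm _ _
    _ = dist (p j) q := by rw [hu, one_mul, dist_comm, dist_eq_norm]
    _ ≤ ε := hpq
  have hεR : ε / R ≤ ε := by
    rw [div_le_iff₀ (by linarith)]; nlinarith
  have : ⟪u, σ⟫ ≤ ⟪u, p j⟫ + 2*ε := by
    have h1 : a = ⟪u, σ⟫ - ⟪u, q⟫ := by rw [ha, inner_sub_right]
    have h2 : ⟪u, q - p j⟫ = ⟪u, q⟫ - ⟪u, p j⟫ := inner_sub_right _ _ _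
    rw [h2] at hqp
    rw [hη2] at ha_key
    linarith
  rw [hsupK]; linarith

/-- Correctness of the ε-kernel construction: for fixed `d ≥ 2` and bounded `R` (`R = O(1)`,
formalized by quantifying over an arbitrary bound `R₀` on `R`), there is a constant `C > 0`
depending only on `d` (and the bound `R₀`) such that for any convex body `B_d ⊆ K ⊆ R·B_d`,
taking an `η`-net of the sphere of radius `R+1` with `η = √(ε/R)` and `ε`-approximate
metric projections `p_j ∈ K` of its points onto `K`, the convex hull of the `p_j` is
contained in `K` and is a `Cε`-kernel of `K`. -/
theorem epsKernel_construction (d : ℕ) (hd : 2 ≤ d) (R₀ : ℝ) (hR₀ : 1 ≤ R₀) :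
    ∃ C : ℝ, 0 < C ∧
      ∀ R : ℝ, 1 ≤ R → R ≤ R₀ →
        ∀ ε : ℝ, 0 < ε → ε < 1 →
          ∀ K : Set (EuclideanSpace ℝ (Fin d)), IsCompact K → Convex ℝ K →
            closedBall (0 : EuclideanSpace ℝ (Fin d)) 1 ⊆ K →
            K ⊆ closedBall (0 : EuclideanSpace ℝ (Fin d)) R →
            ∀ n : ℕ, ∀ xs : Fin n → EuclideanSpace ℝ (Fin d),
              IsNet (Real.sqrt (ε / R)) (Set.range xs)
                (sphere (0 : EuclideanSpace ℝ (Fin d)) (R + 1)) →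
              ∀ p : Fin n → EuclideanSpace ℝ (Fin d),
                (∀ j, p j ∈ K) →
                (∀ j, ∃ q ∈ K,
                  (∀ z ∈ K, dist (xs j) q ≤ dist (xs j) z) ∧ dist (p j) q ≤ ε) →
                convexHull ℝ (Set.range p) ⊆ K ∧
                  IsEpsKernel (C * ε) (convexHull ℝ (Set.range p)) K := by
  refine ⟨4, by norm_num, ?_⟩
  intro R hR _ ε hε hε1 K hKc hKconv hBK hKR n xs hnet p hp happ
  have hKne : K.Nonempty := ⟨0, hBK (mem_closedBall_self (by norm_num))⟩
  have hhull : convexHull ℝ (Set.range p) ⊆ K :=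
    convexHull_min (by rintro _ ⟨j, rfl⟩; exact hp j) hKconv
  refine ⟨hhull, hhull, ?_⟩
  intro u hu
  haveI : Nonempty (Fin d) := ⟨⟨0, by omega⟩⟩
  have hsne : (sphere (0:EuclideanSpace ℝ (Fin d)) (R+1)).Nonempty :=
    NormedSpace.sphere_nonempty.2 (by linarith)
  obtain ⟨v, hv⟩ := hsne
  obtain ⟨w, hw, -⟩ := hnet.2.2 v hv
  obtain ⟨j0, rfl⟩ := hw
  have hhne : (convexHull ℝ (Set.range p)).Nonempty :=
    ⟨p j0, subset_convexHull ℝ _ ⟨j0, rfl⟩⟩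
  have hcont : ∀ w : EuclideanSpace ℝ (Fin d),
      Continuous (fun x : EuclideanSpace ℝ (Fin d) => ⟪w, x⟫) :=
    fun w => continuous_const.inner continuous_id
  have hbdd : ∀ w : EuclideanSpace ℝ (Fin d), ∀ S : Set (EuclideanSpace ℝ (Fin d)), S ⊆ K →
      BddAbove ((fun x => ⟪w, x⟫) '' S) ∧ BddBelow ((fun x => ⟪w, x⟫) '' S) := by
    intro w S hSK
    have hc := hKc.image (hcont w)
    exact ⟨hc.bddAbove.mono (image_mono hSK), hc.bddBelow.mono (image_mono hSK)⟩
  have hwid : ∀ S : Set (EuclideanSpace ℝ (Fin d)), S.Nonempty → S ⊆ K → 0 ≤ dirWidth u S := by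
    rintro S ⟨x, hx⟩ hSK
    obtain ⟨hbA, hbB⟩ := hbdd u S hSK
    exact sub_nonneg.2 ((csInf_le hbB (mem_image_of_mem _ hx)).trans
      (le_csSup hbA (mem_image_of_mem _ hx)))
  by_cases hcase : Real.sqrt (ε/R) ≤ 1/2
  · -- small ε case
    have h1 := key_sSup R ε hR hε K hKc hKconv hKR hKne xs hnet p hp happ hcase u hu
    have h2 := key_sSup R ε hR hε K hKc hKconv hKR hKne xs hnet p hp happ hcase (-u)
      (by rw [norm_neg, hu])
    have hneg : ∀ S : Set (EuclideanSpace ℝ (Fin d)),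
        (fun x => ⟪-u, x⟫) '' S = -((fun x => ⟪u, x⟫) '' S) := by
      intro S
      ext y
      simp only [Set.mem_image, Set.mem_neg, inner_neg_left, neg_eq_iff_eq_neg]
    have hsup_neg : ∀ s : Set ℝ, sSup (-s) = -sInf s := by
      intro s; have := Real.sInf_def s; linarith
    rw [hneg, hneg, hsup_neg, hsup_neg] at h2
    have h2' : sInf ((fun x => ⟪u, x⟫) '' (convexHull ℝ (Set.range p))) ≤
        sInf ((fun x => ⟪u, x⟫) '' K) + 2*ε := by linarith
    -- width of K at least 2
    have huK : u ∈ K := hBK (mem_closedBall_zero_iff.2 hu.le)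
    have hnuK : -u ∈ K := hBK (mem_closedBall_zero_iff.2 (by rw [norm_neg, hu]))
    obtain ⟨hbA, hbB⟩ := hbdd u K (subset_refl K)
    have hinner_u : ⟪u, u⟫ = 1 := by
      rw [real_inner_self_eq_norm_sq, hu]; norm_num
    have hup : (1:ℝ) ≤ sSup ((fun x => ⟪u, x⟫) '' K) := by
      have h := le_csSup hbA (mem_image_of_mem (fun x => ⟪u, x⟫) huK)
      simpa [hinner_u, hu] using h
    have hlo : sInf ((fun x => ⟪u, x⟫) '' K) ≤ -1 := by
      have h := csInf_le hbB (mem_image_of_mem (fun x => ⟪u, x⟫) hnuK)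
      simpa [inner_neg_right, hinner_u, hu] using h
    have hWK2 : 2 ≤ dirWidth u K := by rw [dirWidth]; linarith
    have hgap : dirWidth u K - dirWidth u (convexHull ℝ (Set.range p)) ≤ 4*ε := by
      rw [dirWidth, dirWidth]; linarith
    nlinarith [hwid _ hhne hhull]
  · -- large ε case
    push_neg at hcase
    have h14 : (1:ℝ)/4 < ε/R := by
      by_contra h
      push_neg at h
      have h2 : Real.sqrt (ε/R) ≤ Real.sqrt (1/4) := Real.sqrt_le_sqrt h
      rw [show (1/4:ℝ) = (1/2)^2 by norm_num, Real.sqrt_sq (by norm_num)] at h2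
      linarith
    have hεbig : 1/4 < ε := by
      have : ε/R ≤ ε := by rw [div_le_iff₀ (by linarith)]; nlinarith
      linarith
    have h1 : 1 - 4*ε ≤ 0 := by linarith
    calc (1 - 4*ε) * dirWidth u K ≤ 0 :=
          mul_nonpos_of_nonpos_of_nonneg h1 (hwid K hKne (subset_refl K))
      _ ≤ dirWidth u (convexHull ℝ (Set.range p)) := hwid _ hhne hhull
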